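/- Let F be an algebraically closed field, G a finitely generated group, and ρ a finite-dimensional representation of G over F. If End_{F[G]}(ρ) is commutative and ρ is a self-injective F[G]-module, then for every irreducible representation π of G over F, dim_F Hom_{F[G]}(π, ρ) ≤ 1. -/

import Mathlib

/-- let `F` be an algebraically closed field, `G` a finitely
generated group, and `V` a finite-dimensional representation of `G` over `F`
(i.e. an `F[G]`-module). If `End_{F[G]}(V)` is commutative and `V` is a
self-injective `F[G]`-module, then `dim_F Hom_{F[G]}(W, V) ≤ 1` for every
irreducible representation `W` of `G` over `F`. -/
theorem stmt16 {F : Type*} [Field F] [IsAlgClosed F]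
    {G : Type*} [Group G] [Group.FG G]
    (V : Type*) [AddCommGroup V] [Module (MonoidAlgebra F G) V]
    [Module F V] [IsScalarTower F (MonoidAlgebra F G) V]
    [SMulCommClass (MonoidAlgebra F G) F V]
    [FiniteDimensional F V]
    (hcomm : ∀ f g : Module.End (MonoidAlgebra F G) V, f * g = g * f)
    (hinj : ∀ (K : Submodule (MonoidAlgebra F G) V) (g : K →ₗ[MonoidAlgebra F G] V),
        ∃ h : Module.End (MonoidAlgebra F G) V, ∀ x : K, h x = g x) :
    ∀ (W : Type _) [AddCommGroup W] [Module (MonoidAlgebra F G) W],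
      IsSimpleModule (MonoidAlgebra F G) W →
      Module.rank F (W →ₗ[MonoidAlgebra F G] V) ≤ 1 := by
  intro W _ _ hW
  haveI := hW
  set R := MonoidAlgebra F G with hR
  rw [rank_le_one_iff]
  -- injectivity of nonzero maps
  have hinj' : ∀ f : W →ₗ[R] V, f ≠ 0 → Function.Injective f := by
    intro f hf
    rw [← LinearMap.ker_eq_bot]
    rcases eq_bot_or_eq_top (LinearMap.ker f) with h | h
    · exact h
    · exact absurd (LinearMap.ker_eq_top.mp h) hf
  -- transporter
  have transport : ∀ f g : W →ₗ[R] V, f ≠ 0 →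
      ∃ h : Module.End R V, ∀ w, h (f w) = g w := by
    intro f g hf
    have hfinj := hinj' f hf
    let e := LinearEquiv.ofInjective f hfinj
    obtain ⟨h, hh⟩ := hinj (LinearMap.range f) (g ∘ₗ (e.symm : _ →ₗ[R] W))
    refine ⟨h, fun w => ?_⟩
    have hmem : f w ∈ LinearMap.range f := LinearMap.mem_range_self f w
    have h1 := hh ⟨f w, hmem⟩
    have h2 : e.symm ⟨f w, hmem⟩ = w := by
      rw [LinearEquiv.symm_apply_eq]
      exact Subtype.ext (by simp [e])
    simpa [h2] using h1
  by_cases hex : ∃ f : W →ₗ[R] V, f ≠ 0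
  · obtain ⟨f, hf⟩ := hex
    refine ⟨f, fun g => ?_⟩
    by_cases hg : g = 0
    · exact ⟨0, by simp [hg]⟩
    have hfinj := hinj' f hf
    have hginj := hinj' g hg
    obtain ⟨h, hh⟩ := transport f g hf
    set p := LinearMap.range f with hp
    set q := LinearMap.range g with hq
    by_cases hle : q ≤ p
    · -- Schur case
      haveI : IsSimpleModule R p := IsSimpleModule.congr (LinearEquiv.ofInjective f hfinj).symm
      have hmaps : ∀ x : p, h ((p.subtype : p →ₗ[R] V) x) ∈ p := by
        rintro ⟨x, ⟨w, rfl⟩⟩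
        show h (f w) ∈ p
        rw [hh w]
        exact hle (LinearMap.mem_range_self g w)
      let e : Module.End R p := LinearMap.codRestrict p (h ∘ₗ p.subtype) hmaps
      haveI : FiniteDimensional F p :=
        FiniteDimensional.finiteDimensional_submodule (Submodule.restrictScalars F p)
      haveI : Nontrivial W := IsSimpleModule.nontrivial R W
      haveI : Nontrivial p := by
        obtain ⟨w, hw⟩ := exists_ne (0 : W)
        refine ⟨⟨f w, LinearMap.mem_range_self f w⟩, 0, fun hc => hw ?_⟩
        apply hfinj
        rw [map_zero]
        simpa using congrArg Subtype.val hc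
      let e' : Module.End F p := e.restrictScalars F
      obtain ⟨c, hc⟩ := Module.End.exists_eigenvalue e'
      obtain ⟨v, hv⟩ := hc.exists_hasEigenvector
      obtain ⟨w, hwv⟩ := v.2
      have hvne : v ≠ 0 := hv.2
      have hweq : e v = c • v := hv.apply_eq_smul
      have key : g w = c • f w := by
        have : (e v : V) = h (f w) := by simp [e, hwv]
        rw [hweq] at this
        rw [hh w] at this
        simpa [hwv] using this.symm
      -- now g - c • f has nonzero kernel
      have hwne : w ≠ 0 := by
        intro h0
        apply hvne
        apply Subtype.ext
        simp [← hwv, h0]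
      have hker : w ∈ LinearMap.ker (g - c • f) := by
        simp [LinearMap.mem_ker, key]
      have : LinearMap.ker (g - c • f) = ⊤ := by
        rcases eq_bot_or_eq_top (LinearMap.ker (g - c • f)) with h0 | h0
        · exact absurd (h0 ▸ hker) (by simpa using hwne)
        · exact h0
      have hz : g - c • f = 0 := LinearMap.ker_eq_top.mp this
      exact ⟨c, by linear_combination (norm := abel) -hz⟩
    · -- disjoint images case: contradiction
      exfalso
      haveI : IsSimpleModule R q := IsSimpleModule.congr (LinearEquiv.ofInjective g hginj).symm
      have hatom : IsAtom q := isSimpleModule_iff_isAtom.mp ‹_›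
      have hdisj : p ⊓ q = ⊥ := by
        rcases hatom.le_iff.mp (inf_le_right : p ⊓ q ≤ q) with h0 | h0
        · exact h0
        · exact absurd (h0 ▸ (inf_le_left : p ⊓ q ≤ p)) hle
      set S := p ⊔ q with hS
      set p' := p.comap S.subtype with hp'
      set q' := q.comap S.subtype with hq'
      have hcompl : IsCompl p' q' := by
        constructor
        · rw [disjoint_iff_inf_le]
          rintro x ⟨hxp, hxq⟩
          have : (x : V) ∈ p ⊓ q := ⟨hxp, hxq⟩
          rw [hdisj] at this
          exact (Submodule.mem_bot R).mpr (Subtype.ext ((Submodule.mem_bot R).mp this))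
        · rw [codisjoint_iff_le_sup]
          rintro ⟨x, hx⟩ -
          obtain ⟨a, ha, b, hb, hab⟩ := Submodule.mem_sup.mp hx
          refine Submodule.mem_sup.mpr ⟨⟨a, le_sup_left (a := p) ha⟩, ha,
            ⟨b, le_sup_right (b := q) hb⟩, hb, ?_⟩
          exact Subtype.ext hab
      let proj := Submodule.linearProjOfIsCompl p' q' hcompl
      let π : S →ₗ[R] V := S.subtype ∘ₗ p'.subtype ∘ₗ proj
      obtain ⟨h₂, hh₂⟩ := hinj S π
      have hfw : ∀ w : W, h₂ (f w) = f w := by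
        intro w
        have hmS : f w ∈ S := le_sup_left (a := p) (LinearMap.mem_range_self f w)
        have hmp' : (⟨f w, hmS⟩ : S) ∈ p' := LinearMap.mem_range_self f w
        have := hh₂ ⟨f w, hmS⟩
        rw [this]
        show (S.subtype ∘ₗ p'.subtype ∘ₗ proj) _ = _
        have : proj (⟨f w, hmS⟩ : S) = ⟨⟨f w, hmS⟩, hmp'⟩ :=
          Submodule.linearProjOfIsCompl_apply_left hcompl ⟨⟨f w, hmS⟩, hmp'⟩
        simp [this]
      have hgw : ∀ w : W, h₂ (g w) = 0 := by
        intro w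
        have hmS : g w ∈ S := le_sup_right (b := q) (LinearMap.mem_range_self g w)
        have hmq' : (⟨g w, hmS⟩ : S) ∈ q' := LinearMap.mem_range_self g w
        have := hh₂ ⟨g w, hmS⟩
        rw [this]
        show (S.subtype ∘ₗ p'.subtype ∘ₗ proj) _ = _
        have : proj (⟨g w, hmS⟩ : S) = 0 :=
          Submodule.projectionOnto_apply_of_mem_right hcompl hmq'
        simp [this]
      apply hg
      ext w
      have hc := hcomm h h₂
      have h1 : (h * h₂) (f w) = g w := by
        rw [Module.End.mul_apply, hfw w, hh w]
      have h2 : (h₂ * h) (f w) = 0 := by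
        rw [Module.End.mul_apply, hh w, hgw w]
      show g w = 0
      rw [← h1, hc, h2]
  · push_neg at hex
    exact ⟨0, fun v => ⟨0, by simp [hex v]⟩⟩
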